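/- Define the NRP mean memory transmissivity τ̄(p,x) := (p/(2−p))·(1 + x·(1−p))/(1 − x·(1−p)) for success probability p ∈ (0,1] and per-time-step memory decay factor x ∈ [0,1). Then for every fixed τ ∈ (0,1] and x ∈ [0,1), the quantity −log₂(1 − √η·τ·τ̄(τ·√η, x)), divided by η, converges as η → 0⁺ to τ²·(1+x)/(2·(1−x)·ln 2). Thus at long distances the memory-assisted single-repeater bound scales linearly in η, i.e. it regresses to repeaterless (direct-transmission) scaling rather than the ideal-repeater √η scaling. -/

import Mathlib

/-- The NRP mean memory transmissivity
`τ̄(p,x) = (p/(2-p))·(1 + x·(1-p))/(1 - x·(1-p))` for half-link success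
probability `p` and per-time-step memory decay factor `x`. -/
noncomputable def tauBar (p x : ℝ) : ℝ :=
  (p / (2 - p)) * (1 + x * (1 - p)) / (1 - x * (1 - p))

open Filter Real Topology Set

/-- For fixed constant node efficiency `τ ∈ (0,1]` and memory decay factor
`x ∈ [0,1)`, the memory-assisted single-repeater bound
`-log₂(1 - √η·τ·τ̄(τ·√η, x))`, divided by the end-to-end transmissivity `η`,
converges as `η → 0⁺` to `τ²·(1+x)/(2·(1-x)·ln 2)`: at long distances the bound
scales linearly in `η`, i.e. like repeaterless (direct-transmission) scaling. -/
theorem memory_repeater_bound_linear_scaling (τ x : ℝ)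
    (hτ0 : 0 < τ) (hτ1 : τ ≤ 1) (hx0 : 0 ≤ x) (hx1 : x < 1) :
    Filter.Tendsto
      (fun η : ℝ =>
        (-Real.logb 2 (1 - Real.sqrt η * τ * tauBar (τ * Real.sqrt η) x)) / η)
      (nhdsWithin 0 (Set.Ioi 0))
      (nhds (τ ^ 2 * (1 + x) / (2 * (1 - x) * Real.log 2))) := by
  set u : ℝ → ℝ := fun η => Real.sqrt η * τ * tauBar (τ * Real.sqrt η) x with hu
  set g : ℝ → ℝ := fun η => τ ^ 2 * (1 + x * (1 - τ * Real.sqrt η)) /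
      ((2 - τ * Real.sqrt η) * (1 - x * (1 - τ * Real.sqrt η))) with hg
  set c : ℝ := τ ^ 2 * (1 + x) / (2 * (1 - x)) with hc
  have hmem : Set.Ioo (0:ℝ) 1 ∈ nhdsWithin (0:ℝ) (Set.Ioi 0) :=
    Ioo_mem_nhdsGT_of_mem (by constructor <;> norm_num)
  -- key facts on (0,1)
  have key : ∀ η ∈ Set.Ioo (0:ℝ) 1, u η = η * g η ∧ 0 < g η := by
    intro η hη
    have hs0 : 0 < Real.sqrt η := Real.sqrt_pos.mpr hη.1
    have hs1 : Real.sqrt η < 1 := by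
      rw [show (1:ℝ) = Real.sqrt 1 by simp]
      exact Real.sqrt_lt_sqrt hη.1.le hη.2
    have hp1 : τ * Real.sqrt η < 1 :=
      lt_of_le_of_lt (by nlinarith) hs1
    have hp0 : 0 < τ * Real.sqrt η := mul_pos hτ0 hs0
    have hd1 : 0 < 2 - τ * Real.sqrt η := by linarith
    have hxle : x * (1 - τ * Real.sqrt η) ≤ x :=
      mul_le_of_le_one_right hx0 (by linarith)
    have hd2 : 0 < 1 - x * (1 - τ * Real.sqrt η) := by linarith
    have hxnn : 0 ≤ x * (1 - τ * Real.sqrt η) := by nlinarith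
    have hss : Real.sqrt η * Real.sqrt η = η := Real.mul_self_sqrt hη.1.le
    constructor
    · rw [hu, hg]
      simp only [tauBar]
      rw [← hss]
      simp only [Real.sqrt_mul_self hs0.le]
      field_simp
    · apply div_pos
      · nlinarith
      · exact mul_pos hd1 hd2
  -- sqrt tends to 0
  have hsq : Tendsto Real.sqrt (nhdsWithin (0:ℝ) (Set.Ioi 0)) (nhds 0) :=
    (Real.continuous_sqrt.tendsto' 0 0 (by simp)).mono_left nhdsWithin_le_nhds
  -- g tends to c
  have hG : ContinuousAt (fun s : ℝ => τ ^ 2 * (1 + x * (1 - τ * s)) /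
      ((2 - τ * s) * (1 - x * (1 - τ * s)))) 0 := by
    apply ContinuousAt.div (by fun_prop) (by fun_prop)
    have : (2 - τ * 0) * (1 - x * (1 - τ * 0)) = 2 * (1 - x) := by ring
    rw [this]
    exact ne_of_gt (by nlinarith)
  have hgc : Tendsto g (nhdsWithin (0:ℝ) (Set.Ioi 0)) (nhds c) := by
    have h := hG.tendsto.comp hsq
    have hval : τ ^ 2 * (1 + x * (1 - τ * 0)) /
        ((2 - τ * 0) * (1 - x * (1 - τ * 0))) = c := by rw [hc]; ring_nf
    rw [hval] at h
    exact h
  -- u tends to 0 within {0}ᶜ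
  have hid : Tendsto (fun η : ℝ => η) (nhdsWithin (0:ℝ) (Set.Ioi 0)) (nhds 0) :=
    Filter.tendsto_id.mono_left nhdsWithin_le_nhds
  have hu0 : Tendsto u (nhdsWithin (0:ℝ) (Set.Ioi 0)) (nhds 0) := by
    have h := hid.mul hgc
    rw [zero_mul] at h
    exact h.congr' (by filter_upwards [hmem] with η hη using ((key η hη).1).symm)
  have hu_ne : Tendsto u (nhdsWithin (0:ℝ) (Set.Ioi 0)) (nhdsWithin 0 {(0:ℝ)}ᶜ) := by
    apply tendsto_nhdsWithin_of_tendsto_nhds_of_eventually_within _ hu0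
    filter_upwards [hmem] with η hη
    obtain ⟨heq, hgpos⟩ := key η hη
    simp only [Set.mem_compl_iff, Set.mem_singleton_iff]
    rw [heq]
    exact ne_of_gt (mul_pos hη.1 hgpos)
  -- slope of log(1-t) at 0
  have hlog : Tendsto (fun t : ℝ => Real.log (1 - t) / t)
      (nhdsWithin (0:ℝ) {(0:ℝ)}ᶜ) (nhds (-1)) := by
    have h1 : HasDerivAt (fun t : ℝ => 1 - t) (-1) 0 := by
      simpa using (hasDerivAt_id (0:ℝ)).const_sub 1
    have hd : HasDerivAt (fun t : ℝ => Real.log (1 - t)) (-1) 0 := by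
      have := (Real.hasDerivAt_log (by norm_num : (1:ℝ) - 0 ≠ 0)).comp 0 h1
      simpa [Function.comp_def] using this
    have h := hasDerivAt_iff_tendsto_slope.mp hd
    refine h.congr fun t => ?_
    simp [slope_def_field, Real.log_one]
  have hcomp : Tendsto (fun η => Real.log (1 - u η) / u η)
      (nhdsWithin (0:ℝ) (Set.Ioi 0)) (nhds (-1)) := hlog.comp hu_ne
  -- assemble
  have hmain : Tendsto (fun η => -((Real.log (1 - u η) / u η) * g η) / Real.log 2)
      (nhdsWithin (0:ℝ) (Set.Ioi 0)) (nhds (-((-1) * c) / Real.log 2)) :=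
    ((hcomp.mul hgc).neg).div_const _
  have hlog2 : Real.log 2 ≠ 0 := Real.log_ne_zero_of_pos_of_ne_one (by norm_num) (by norm_num)
  have hx' : (1:ℝ) - x ≠ 0 := by linarith
  have hval : -((-1) * c) / Real.log 2 = τ ^ 2 * (1 + x) / (2 * (1 - x) * Real.log 2) := by
    rw [hc]
    field_simp
  rw [hval] at hmain
  clear_value u g c
  refine hmain.congr' ?_
  filter_upwards [hmem] with η hη
  obtain ⟨heq, hgpos⟩ := key η hη
  have hη0 : η ≠ 0 := ne_of_gt hη.1
  have hgne : g η ≠ 0 := ne_of_gt hgpos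
  have h2 : Real.log (1 - u η) / u η * g η = Real.log (1 - u η) / η := by
    rw [heq]
    field_simp
  have huη : Real.sqrt η * τ * tauBar (τ * Real.sqrt η) x = u η := by rw [hu]
  rw [huη, Real.logb, h2]
  ring
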